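/- Let D be a square-free positive integer with D ≡ 1 (mod 4) and D > 1. Then in the ring of integers O = ℤ[√-D] of ℚ(√-D), the ideal generated by √-D + 1 and 2 is not principal. -/
import Mathlib


/-- For squarefree D ≡ 1 mod 4, D > 1, the ideal (√-D + 1, 2) of ℤ[√-D]
is not principal. -/
theorem stmt_1 (D : ℕ) (hD : Squarefree D) (hD1 : 1 < D) (hmod : D % 4 = 1) :
    ¬ (Ideal.span ({Zsqrtd.sqrtd + 1, (2 : Zsqrtd (-(D : ℤ)))} :
        Set (Zsqrtd (-(D : ℤ))))).IsPrincipal := by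
  rintro ⟨g, hg⟩
  have hg' : Ideal.span ({Zsqrtd.sqrtd + 1, (2 : Zsqrtd (-(D : ℤ)))} :
      Set (Zsqrtd (-(D : ℤ)))) = Ideal.span {g} := hg
  have hDle : (5 : ℤ) ≤ D := by omega
  have hdneg : (-(D : ℤ)) ≤ 0 := by omega
  have h1 : g ∣ (Zsqrtd.sqrtd + 1 : Zsqrtd (-(D : ℤ))) := by
    rw [← Ideal.mem_span_singleton, ← hg']
    exact Ideal.subset_span (Set.mem_insert _ _)
  have h2 : g ∣ (2 : Zsqrtd (-(D : ℤ))) := by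
    rw [← Ideal.mem_span_singleton, ← hg']
    exact Ideal.subset_span (Set.mem_insert_of_mem _ rfl)
  have hn1 : g.norm ∣ 1 + D := by
    obtain ⟨c, hc⟩ := h1
    refine ⟨c.norm, ?_⟩
    have := congrArg Zsqrtd.norm hc
    rw [Zsqrtd.norm_mul] at this
    rw [← this]
    simp [Zsqrtd.norm_def]
  have hn2 : g.norm ∣ 4 := by
    obtain ⟨c, hc⟩ := h2
    refine ⟨c.norm, ?_⟩
    have := congrArg Zsqrtd.norm hc
    rw [Zsqrtd.norm_mul] at this
    rw [← this]
    simp [Zsqrtd.norm_def]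
  have hnn : 0 ≤ g.norm := Zsqrtd.norm_nonneg hdneg g
  have hle : g.norm ≤ 4 := Int.le_of_dvd (by norm_num) hn2
  have hone : g.norm = 1 := by
    have hnd := Zsqrtd.norm_def g
    interval_cases h : g.norm
    · obtain ⟨k, hk⟩ := hn2; omega
    · rfl
    · -- norm = 2 : impossible
      exfalso
      rcases eq_or_ne g.im 0 with him | him
      · rw [him] at hnd
        simp at hnd
        have ha : g.re ≤ 1 := by nlinarith [mul_self_nonneg (g.re - 1)]
        have hb : -1 ≤ g.re := by nlinarith [mul_self_nonneg (g.re + 1)]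
        interval_cases g.re <;> omega
      · have h1' : 1 ≤ g.im * g.im := by
          have := mul_self_pos.mpr him
          omega
        nlinarith [mul_self_nonneg g.re]
    · obtain ⟨k, hk⟩ := hn2; omega
    · obtain ⟨k, hk⟩ := hn1; omega
  have hu : IsUnit g := (Zsqrtd.norm_eq_one_iff' hdneg g).mp hone
  have h1mem : (1 : Zsqrtd (-(D : ℤ))) ∈ Ideal.span
      ({Zsqrtd.sqrtd + 1, (2 : Zsqrtd (-(D : ℤ)))} : Set (Zsqrtd (-(D : ℤ)))) := by
    rw [hg', Ideal.span_singleton_eq_top.mpr hu]; trivial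
  rw [Ideal.mem_span_pair] at h1mem
  obtain ⟨a, b, hab⟩ := h1mem
  have hre := congrArg Zsqrtd.re hab
  have him := congrArg Zsqrtd.im hab
  simp [Zsqrtd.re_mul, Zsqrtd.im_mul, Zsqrtd.re_add, Zsqrtd.im_add] at hre him
  obtain ⟨k, hk⟩ : ∃ k : ℤ, (D : ℤ) = 4 * k + 1 := ⟨(D / 4 : ℕ), by omega⟩
  have key : 2 * a.re - 4 * (k * a.im) + 2 * (b.re + b.im) = 1 := by
    linear_combination hre + him + a.im * hk
  generalize k * a.im = m at key
  omega
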